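/- Let R be a family of real-valued functions on a set E and let e_1, …, e_d : E → ℝ be finitely many functions such that {e_1, …, e_d} and R generate the same uniformity on E. Define ψ : E → ℝ^d by ψ(x) = (e_1(x), …, e_d(x)), and let E' be the closure of ψ(E) in ℝ^d. Then the continuous extensions of the members of R separate the points of E': for any ξ, η ∈ E', if F(ξ) = F(η) for every f ∈ R and every continuous function F : E' → ℝ satisfying F ∘ ψ = f, then ξ = η. -/
import Mathlib

open Filter Topology

def SameUniformity {E : Type*} (H G : Set (E → ℝ)) : Prop :=
  ∀ x : ℕ → E,
    (∀ h ∈ H, CauchySeq fun n => h (x n)) ↔ (∀ g ∈ G, CauchySeq fun n => g (x n))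

def psiMap {E : Type*} {d : ℕ} (e : Fin d → E → ℝ) (x : E) : Fin d → ℝ :=
  fun i => e i x

private lemma tendsto_interleave {X : Type*} [PseudoMetricSpace X] {x y : ℕ → X} {c : X}
    (hx : Tendsto x atTop (𝓝 c)) (hy : Tendsto y atTop (𝓝 c)) :
    Tendsto (fun n => if n % 2 = 0 then x (n / 2) else y (n / 2)) atTop (𝓝 c) := by
  rw [Metric.tendsto_atTop] at hx hy ⊢
  intro ε hε
  obtain ⟨N1, h1⟩ := hx ε hε
  obtain ⟨N2, h2⟩ := hy ε hε
  refine ⟨2 * max N1 N2, fun n hn => ?_⟩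
  have hdiv : max N1 N2 ≤ n / 2 := by omega
  by_cases hpar : n % 2 = 0
  · simpa [hpar] using h1 _ (le_trans (le_max_left _ _) hdiv)
  · simpa [hpar] using h2 _ (le_trans (le_max_right _ _) hdiv)

private lemma tendsto_double : Tendsto (fun k : ℕ => 2 * k) atTop atTop :=
  tendsto_atTop_atTop.mpr fun b => ⟨b, fun a ha => by omega⟩

private lemma tendsto_double_succ : Tendsto (fun k : ℕ => 2 * k + 1) atTop atTop :=
  tendsto_atTop_atTop.mpr fun b => ⟨b, fun a ha => by omega⟩

section
variable {E : Type*} {d : ℕ} (R : Set (E → ℝ)) (e : Fin d → E → ℝ)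

private lemma cauchy_f (h : SameUniformity (Set.range e) R) {f : E → ℝ} (hf : f ∈ R)
    {z : ℕ → E} (hz : CauchySeq fun n => psiMap e (z n)) :
    CauchySeq fun n => f (z n) := by
  refine (h z).mp ?_ f hf
  rintro h0 ⟨i, rfl⟩
  exact (Pi.uniformContinuous_proj _ i).comp_cauchySeq hz

private lemma exists_limit (h : SameUniformity (Set.range e) R) {f : E → ℝ} (hf : f ∈ R)
    {p : Fin d → ℝ} (hp : p ∈ closure (Set.range (psiMap e))) :
    ∃ c : ℝ, ∀ x : ℕ → E, Tendsto (fun n => psiMap e (x n)) atTop (𝓝 p) →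
      Tendsto (fun n => f (x n)) atTop (𝓝 c) := by
  obtain ⟨s, hs, hsp⟩ := mem_closure_iff_seq_limit.mp hp
  choose x hx using hs
  have hxp : Tendsto (fun n => psiMap e (x n)) atTop (𝓝 p) := by
    simpa [hx] using hsp
  have hfx : CauchySeq fun n => f (x n) := cauchy_f R e h hf hxp.cauchySeq
  obtain ⟨c, hc⟩ := cauchySeq_tendsto_of_complete hfx
  refine ⟨c, fun y hy => ?_⟩
  set z : ℕ → E := fun n => if n % 2 = 0 then x (n / 2) else y (n / 2) with hzdef
  have hzp : Tendsto (fun n => psiMap e (z n)) atTop (𝓝 p) := by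
    have := tendsto_interleave hxp hy
    simpa [hzdef, apply_ite (psiMap e)] using this
  have hfz : CauchySeq fun n => f (z n) := cauchy_f R e h hf hzp.cauchySeq
  obtain ⟨c', hc'⟩ := cauchySeq_tendsto_of_complete hfz
  have hevene : (fun k => f (z (2 * k))) = fun k => f (x k) := by
    funext k
    have h1 : 2 * k % 2 = 0 := by omega
    have h2 : 2 * k / 2 = k := by omega
    simp [hzdef, h1, h2]
  have hodde : (fun k => f (z (2 * k + 1))) = fun k => f (y k) := by
    funext k
    have h1 : (2 * k + 1) % 2 ≠ 0 := by omega
    have h2 : (2 * k + 1) / 2 = k := by omega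
    simp [hzdef, h1, h2]
  have heven : Tendsto (fun k => f (x k)) atTop (𝓝 c') := by
    have := hc'.comp tendsto_double
    rwa [Function.comp_def, hevene] at this
  have hcc : c' = c := tendsto_nhds_unique heven hc
  have hodd : Tendsto (fun k => f (y k)) atTop (𝓝 c') := by
    have := hc'.comp tendsto_double_succ
    rwa [Function.comp_def, hodde] at this
  rwa [hcc] at hodd

private lemma exists_extension (h : SameUniformity (Set.range e) R) {f : E → ℝ} (hf : f ∈ R) :
    ∃ F : closure (Set.range (psiMap e)) → ℝ, Continuous F ∧
      ∀ x : E, F ⟨psiMap e x, subset_closure (Set.mem_range_self x)⟩ = f x := by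
  choose c hc using fun p : closure (Set.range (psiMap e)) => exists_limit R e h hf p.2
  refine ⟨c, ?_, fun x₀ => ?_⟩
  · rw [continuous_iff_continuousAt]
    intro p
    rw [ContinuousAt, tendsto_iff_seq_tendsto]
    intro q hq
    -- for each k choose w k : E with ψ (w k) close to q k and f (w k) close to c (q k)
    have hW : ∀ k : ℕ, ∃ w : E, dist (psiMap e w) ((q k : Fin d → ℝ)) < 1 / (k + 1) ∧
        dist (f w) (c (q k)) < 1 / (k + 1) := by
      intro k
      obtain ⟨s, hs, hsp⟩ := mem_closure_iff_seq_limit.mp (q k).2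
      choose x hx using hs
      have hxp : Tendsto (fun n => psiMap e (x n)) atTop (𝓝 ((q k : Fin d → ℝ))) := by
        simpa [hx] using hsp
      have hfx : Tendsto (fun n => f (x n)) atTop (𝓝 (c (q k))) := hc (q k) x hxp
      have hk : (0:ℝ) < 1 / (k + 1) := by positivity
      have h1 := (Metric.tendsto_atTop.mp hxp) _ hk
      have h2 := (Metric.tendsto_atTop.mp hfx) _ hk
      obtain ⟨N1, h1⟩ := h1
      obtain ⟨N2, h2⟩ := h2
      exact ⟨x (max N1 N2), h1 _ (le_max_left _ _), h2 _ (le_max_right _ _)⟩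
    choose w hw1 hw2 using hW
    have hqd : Tendsto (fun k => dist ((q k : Fin d → ℝ)) ((p : Fin d → ℝ))) atTop (𝓝 0) := by
      have : Tendsto (fun k => dist (q k) p) atTop (𝓝 0) :=
        (tendsto_iff_dist_tendsto_zero).mp hq
      simpa [Subtype.dist_eq] using this
    have hone : Tendsto (fun k : ℕ => 1 / ((k : ℝ) + 1)) atTop (𝓝 0) :=
      tendsto_one_div_add_atTop_nhds_zero_nat
    have hwp : Tendsto (fun k => psiMap e (w k)) atTop (𝓝 ((p : Fin d → ℝ))) := by
      rw [tendsto_iff_dist_tendsto_zero]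
      refine squeeze_zero (g := fun k : ℕ =>
          1 / ((k : ℝ) + 1) + dist ((q k : Fin d → ℝ)) ((p : Fin d → ℝ))) (fun k => dist_nonneg)
        (fun k => ?_) ?_
      case refine_2 =>
        have hg := hone.add hqd
        rwa [add_zero] at hg
      calc dist (psiMap e (w k)) ((p : Fin d → ℝ)) ≤
            dist (psiMap e (w k)) ((q k : Fin d → ℝ)) + dist ((q k : Fin d → ℝ)) ((p : Fin d → ℝ)) :=
            dist_triangle _ _ _
        _ ≤ 1 / (k + 1) + dist ((q k : Fin d → ℝ)) ((p : Fin d → ℝ)) := by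
            gcongr; exact (hw1 k).le
    have hfw : Tendsto (fun k => f (w k)) atTop (𝓝 (c p)) := hc p w hwp
    have hfwd : Tendsto (fun k => dist (f (w k)) (c p)) atTop (𝓝 0) :=
      tendsto_iff_dist_tendsto_zero.mp hfw
    rw [tendsto_iff_dist_tendsto_zero]
    refine squeeze_zero (g := fun k : ℕ =>
        1 / ((k : ℝ) + 1) + dist (f (w k)) (c p)) (fun k => dist_nonneg) (fun k => ?_) ?_
    case refine_2 =>
      have hg := hone.add hfwd
      rwa [add_zero] at hg
    calc dist (c (q k)) (c p) ≤ dist (c (q k)) (f (w k)) + dist (f (w k)) (c p) :=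
          dist_triangle _ _ _
      _ ≤ 1 / (k + 1) + dist (f (w k)) (c p) := by
          gcongr
          rw [dist_comm]; exact (hw2 k).le
  · have h1 := hc ⟨psiMap e x₀, subset_closure (Set.mem_range_self x₀)⟩ (fun _ => x₀)
      tendsto_const_nhds
    exact (tendsto_nhds_unique h1 tendsto_const_nhds)

end

/-- If `{e₁, …, e_d} ∼ R`, the continuous extensions of members of `R` to the intrinsic
state space `E' = closure (ψ(E))` separate the points of `E'`. -/
theorem extensions_separate_points {E : Type*} {d : ℕ} (R : Set (E → ℝ))
    (e : Fin d → E → ℝ) (h : SameUniformity (Set.range e) R)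
    (ξ η : closure (Set.range (psiMap e)))
    (hsep : ∀ f ∈ R, ∀ F : closure (Set.range (psiMap e)) → ℝ, Continuous F →
      (∀ x : E, F ⟨psiMap e x, subset_closure (Set.mem_range_self x)⟩ = f x) →
      F ξ = F η) :
    ξ = η := by
  obtain ⟨sx, hsx, hsxp⟩ := mem_closure_iff_seq_limit.mp ξ.2
  choose x hx using hsx
  have hxp : Tendsto (fun n => psiMap e (x n)) atTop (𝓝 ((ξ : Fin d → ℝ))) := by
    simpa [hx] using hsxp
  obtain ⟨sy, hsy, hsyp⟩ := mem_closure_iff_seq_limit.mp η.2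
  choose y hy using hsy
  have hyp : Tendsto (fun n => psiMap e (y n)) atTop (𝓝 ((η : Fin d → ℝ))) := by
    simpa [hy] using hsyp
  set z : ℕ → E := fun n => if n % 2 = 0 then x (n / 2) else y (n / 2) with hzdef
  -- each f ∈ R is Cauchy along z
  have hfz : ∀ f ∈ R, CauchySeq fun n => f (z n) := by
    intro f hf
    obtain ⟨F, hFc, hFe⟩ := exists_extension R e h hf
    have hFeq : F ξ = F η := hsep f hf F hFc hFe
    -- f ∘ x → F ξ
    have hsub : ∀ (u : ℕ → E) (p : closure (Set.range (psiMap e))),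
        Tendsto (fun n => psiMap e (u n)) atTop (𝓝 ((p : Fin d → ℝ))) →
        Tendsto (fun n => f (u n)) atTop (𝓝 (F p)) := by
      intro u p hu
      have hsub' : Tendsto (fun n => (⟨psiMap e (u n),
          subset_closure (Set.mem_range_self (u n))⟩ : closure (Set.range (psiMap e))))
          atTop (𝓝 p) := by
        rw [tendsto_subtype_rng]
        exact hu
      have := (hFc.tendsto p).comp hsub'
      simpa [Function.comp_def, hFe] using this
    have hfx := hsub x ξ hxp
    have hfy := hsub y η hyp
    rw [← hFeq] at hfy
    have := (tendsto_interleave hfx hfy).cauchySeq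
    have hzz : (fun n => if n % 2 = 0 then f (x (n / 2)) else f (y (n / 2))) =
        fun n => f (z n) := by
      funext n
      by_cases hp : n % 2 = 0 <;> simp [hzdef, hp]
    rwa [hzz] at this
  have hez : ∀ i : Fin d, CauchySeq fun n => e i (z n) := by
    intro i
    exact (h z).mpr hfz (e i) ⟨i, rfl⟩
  have hcoord : ∀ i : Fin d, (ξ : Fin d → ℝ) i = (η : Fin d → ℝ) i := by
    intro i
    obtain ⟨L, hL⟩ := cauchySeq_tendsto_of_complete (hez i)
    have hxi : Tendsto (fun n => e i (x n)) atTop (𝓝 ((ξ : Fin d → ℝ) i)) :=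
      ((continuous_apply i).tendsto _).comp hxp
    have hyi : Tendsto (fun n => e i (y n)) atTop (𝓝 ((η : Fin d → ℝ) i)) :=
      ((continuous_apply i).tendsto _).comp hyp
    have hevene : (fun k => e i (z (2 * k))) = fun k => e i (x k) := by
      funext k
      have h1 : 2 * k % 2 = 0 := by omega
      have h2 : 2 * k / 2 = k := by omega
      simp [hzdef, h1, h2]
    have hodde : (fun k => e i (z (2 * k + 1))) = fun k => e i (y k) := by
      funext k
      have h1 : (2 * k + 1) % 2 ≠ 0 := by omega
      have h2 : (2 * k + 1) / 2 = k := by omega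
      simp [hzdef, h1, h2]
    have heven : Tendsto (fun k => e i (x k)) atTop (𝓝 L) := by
      have := hL.comp tendsto_double
      rwa [Function.comp_def, hevene] at this
    have hodd : Tendsto (fun k => e i (y k)) atTop (𝓝 L) := by
      have := hL.comp tendsto_double_succ
      rwa [Function.comp_def, hodde] at this
    rw [tendsto_nhds_unique hxi heven, tendsto_nhds_unique hyi hodd]
  exact Subtype.ext (funext hcoord)
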